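/- Let n ≥ 1, let J be the standard 2n×2n symplectic matrix, let A be a real 2n×2n matrix, let N be a real symmetric 2n×2n matrix, and define M_t = ∫_0^t (exp(τA))ᵀ · N · exp(τA) dτ for t ≥ 0. If the complex Hermitian matrix M_t + i·(J − (exp(tA))ᵀ J exp(tA)) is positive semidefinite for every t > 0, then the complex Hermitian matrix N + i·(AᵀJ + JA) is positive semidefinite. -/

import Mathlib

noncomputable section
open Matrix
open scoped ComplexOrder

/-- The standard `2n × 2n` symplectic matrix: block diagonal with `n` copies of
the block `((0,1),(-1,0))`. -/
def sympJ (n : ℕ) : Matrix (Fin (2*n)) (Fin (2*n)) ℝ :=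
  Matrix.of fun j k =>
    if j.val % 2 = 0 ∧ k.val = j.val + 1 then 1
    else if k.val % 2 = 0 ∧ j.val = k.val + 1 then -1 else 0
/-- `Mmat d A N t = ∫_0^t (exp(τA))ᵀ · N · exp(τA) dτ` (entrywise integral). -/
def Mmat (d : ℕ) (A N : Matrix (Fin d) (Fin d) ℝ) (t : ℝ) : Matrix (Fin d) (Fin d) ℝ :=
  Matrix.of fun i j =>
    ∫ τ in (0:ℝ)..t, ((NormedSpace.exp (τ • A))ᵀ * N * NormedSpace.exp (τ • A)) i j

open Filter Topology

attribute [local instance] Matrix.linftyOpNormedAddCommGroup Matrix.linftyOpNormedRing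
  Matrix.linftyOpNormedAlgebra

lemma sympJ_transpose (n : ℕ) : (sympJ n)ᵀ = -(sympJ n) := by
  ext j k
  simp only [sympJ, transpose_apply, Matrix.neg_apply, of_apply]
  split_ifs with h1 h2 h3 <;> try norm_num
  all_goals omega

lemma hasDerivAt_entry {d : ℕ} {f : ℝ → Matrix (Fin d) (Fin d) ℝ}
    {f' : Matrix (Fin d) (Fin d) ℝ} {t : ℝ} (hf : HasDerivAt f f' t) (i j : Fin d) :
    HasDerivAt (fun s => f s i j) (f' i j) t := by
  have := ((Matrix.entryLinearMap ℝ ℝ i j).toContinuousLinearMap.hasFDerivAt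
    (x := f t)).comp_hasDerivAt t hf
  exact this

/-- quadratic form of `P.map ofReal + c • Q.map ofReal` as a double sum. -/
lemma quad_sum {d : ℕ} (P Q : Matrix (Fin d) (Fin d) ℝ) (c : ℂ) (x : Fin d → ℂ) :
    star x ⬝ᵥ ((P.map Complex.ofReal + c • Q.map Complex.ofReal) *ᵥ x) =
      ∑ i, ∑ j, (starRingEnd ℂ (x i) * x j) * (((P i j : ℝ) : ℂ) + c * ((Q i j : ℝ) : ℂ)) := by
  simp only [dotProduct, mulVec, Pi.star_apply, Matrix.add_apply, Matrix.smul_apply,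
    Matrix.map_apply, smul_eq_mul, Finset.mul_sum]
  refine Finset.sum_congr rfl fun i _ => Finset.sum_congr rfl fun j _ => ?_
  simp only [RCLike.star_def]
  ring

lemma mapC_conjTranspose {d : ℕ} (P : Matrix (Fin d) (Fin d) ℝ) :
    (P.map Complex.ofReal)ᴴ = Pᵀ.map Complex.ofReal := by
  ext i j
  simp [conjTranspose_apply, Complex.conj_ofReal]

lemma infinitesimal_aux {d : ℕ} (A N J : Matrix (Fin d) (Fin d) ℝ)
    (hN : Nᵀ = N) (hJ : Jᵀ = -J)
    (h : ∀ t : ℝ, 0 < t →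
      ((Mmat d A N t).map Complex.ofReal +
        Complex.I • ((J -
          (NormedSpace.exp (t • A))ᵀ * J * NormedSpace.exp (t • A)).map
            Complex.ofReal)).PosSemidef) :
    (N.map Complex.ofReal +
      Complex.I • ((Aᵀ * J + J * A).map Complex.ofReal)).PosSemidef := by
  set S := Aᵀ * J + J * A with hS
  set E : ℝ → Matrix (Fin d) (Fin d) ℝ := fun t => NormedSpace.exp (t • A) with hE
  have hE0 : E 0 = 1 := by simp [hE, NormedSpace.exp_zero]
  -- transpose of S
  have hSt : Sᵀ = -S := by
    rw [hS, transpose_add, transpose_mul, transpose_mul, transpose_transpose, hJ]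
    simp only [neg_mul, mul_neg]
    abel
  -- hermitian
  have hherm : (N.map Complex.ofReal + Complex.I • (S.map Complex.ofReal)).IsHermitian := by
    rw [Matrix.IsHermitian, conjTranspose_add, conjTranspose_smul, mapC_conjTranspose,
      mapC_conjTranspose, hN, hSt]
    simp only [neg_smul, neg_neg, Complex.star_def, Complex.conj_I]
    congr 1
    ext i j
    simp
  -- derivative of exp
  have hEder : HasDerivAt E A 0 := by
    have := _root_.hasDerivAt_exp_smul_const (𝕂 := ℝ) A (0 : ℝ)
    simp [hE, NormedSpace.exp_zero] at this
    exact this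
  -- derivative of transpose of exp
  have hETder : HasDerivAt (fun t => (E t)ᵀ) Aᵀ 0 := by
    have := ((Matrix.transposeLinearEquiv (Fin d) (Fin d) ℝ ℝ).toLinearMap.toContinuousLinearMap.hasFDerivAt
      (x := E 0)).comp_hasDerivAt 0 hEder
    exact this
  -- derivative of E^T J E
  have hProd : HasDerivAt (fun t => (E t)ᵀ * J * E t) S 0 := by
    have h1 : HasDerivAt (fun t => (E t)ᵀ * J) (Aᵀ * J) 0 := hETder.mul_const J
    have h2 := h1.mul hEder
    rw [hE0] at h2
    simp [hS, Pi.mul_def] at h2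
    exact h2
  have hQder : ∀ i j, HasDerivAt (fun t => (J - (E t)ᵀ * J * E t) i j) (-(S i j)) 0 := by
    intro i j
    have := (hasDerivAt_entry hProd i j).const_sub (J i j)
    simpa [Matrix.sub_apply] using this
  -- continuity of the integrand and derivative of Mmat
  have hcE : Continuous E :=
    NormedSpace.exp_continuous.comp (continuous_id.smul continuous_const : Continuous fun t : ℝ => t • A)
  have hcET : Continuous fun t => (E t)ᵀ :=
    (Matrix.transposeLinearEquiv (Fin d) (Fin d) ℝ ℝ).toLinearMap.toContinuousLinearMap.continuous.comp hcE
  have hcf : ∀ i j : Fin d, Continuous fun τ : ℝ => ((E τ)ᵀ * N * E τ) i j := by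
    intro i j
    exact ((Matrix.entryLinearMap ℝ ℝ i j).toContinuousLinearMap.continuous).comp
      ((hcET.mul continuous_const).mul hcE)
  have hMder : ∀ i j, HasDerivAt (fun t => Mmat d A N t i j) (N i j) 0 := by
    intro i j
    have hc := hcf i j
    have hint := intervalIntegral.integral_hasDerivAt_right
      (hc.intervalIntegrable 0 0) (hc.stronglyMeasurableAtFilter _ _) hc.continuousAt
    have hv : ((E 0)ᵀ * N * E 0) i j = N i j := by rw [hE0]; simp
    rw [hv] at hint
    exact hint
  -- quadratic forms
  refine Matrix.PosSemidef.of_dotProduct_mulVec_nonneg hherm fun x => ?_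
  set q : ℂ := star x ⬝ᵥ ((N.map Complex.ofReal + Complex.I • (S.map Complex.ofReal)) *ᵥ x) with hq
  set g : ℝ → ℂ := fun t =>
    star x ⬝ᵥ (((Mmat d A N t).map Complex.ofReal +
      (-Complex.I) • ((J - (E t)ᵀ * J * E t).map Complex.ofReal)) *ᵥ x) with hg
  -- derivative of g at 0 is q
  have hgder : HasDerivAt g q 0 := by
    have hgeq : g = fun t => ∑ i, ∑ j, (starRingEnd ℂ (x i) * x j) *
        (((Mmat d A N t i j : ℝ) : ℂ) + (-Complex.I) * (((J - (E t)ᵀ * J * E t) i j : ℝ) : ℂ)) :=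
      funext fun t => quad_sum _ _ _ x
    have hqeq : q = ∑ i, ∑ j, (starRingEnd ℂ (x i) * x j) *
        (((N i j : ℝ) : ℂ) + Complex.I * ((S i j : ℝ) : ℂ)) := quad_sum _ _ _ x
    rw [hgeq, hqeq]
    refine HasDerivAt.fun_sum fun i _ => HasDerivAt.fun_sum fun j _ => HasDerivAt.const_mul _ ?_
    have h1 := (hMder i j).ofReal_comp
    have h2 := ((hQder i j).ofReal_comp).const_mul (-Complex.I)
    have h3 := h1.fun_add h2
    refine h3.congr_deriv ?_
    push_cast
    ring
  have hg0 : g 0 = 0 := by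
    have hM0 : Mmat d A N 0 = 0 := by
      ext i j
      simp [Mmat, intervalIntegral.integral_same]
    rw [hg]
    simp only [hM0, hE0]
    simp
  -- tendsto of slope
  have hslope : Tendsto (fun t : ℝ => (Complex.ofReal t)⁻¹ * g t) (𝓝[>] (0:ℝ)) (𝓝 q) := by
    have hs := hasDerivAt_iff_tendsto_slope.mp hgder
    have hs' : Tendsto (slope g 0) (𝓝[>] (0:ℝ)) (𝓝 q) :=
      hs.mono_left (nhdsWithin_mono _ fun y hy => ne_of_gt hy)
    refine hs'.congr' ?_
    filter_upwards [self_mem_nhdsWithin] with t ht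
    rw [slope_def_module, hg0, sub_zero, sub_zero, Complex.real_smul]
    push_cast
    ring
  -- nonnegativity of the slope
  have hnonneg : ∀ᶠ t in 𝓝[>] (0:ℝ), 0 ≤ (Complex.ofReal t)⁻¹ * g t := by
    filter_upwards [self_mem_nhdsWithin] with t ht
    have hgt : 0 ≤ g t := by
      have hpsd := (h t ht).transpose
      have hMsym : (Mmat d A N t)ᵀ = Mmat d A N t := by
        ext i j
        simp only [Mmat, transpose_apply, of_apply]
        congr 1
        funext τ
        have hsym : ((E τ)ᵀ * N * E τ)ᵀ = (E τ)ᵀ * N * E τ := by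
          rw [transpose_mul, transpose_mul, transpose_transpose, hN, mul_assoc]
        conv_lhs => rw [← hsym]
        simp [transpose_apply]
        rfl
      have hQskew : (J - (E t)ᵀ * J * E t)ᵀ = -(J - (E t)ᵀ * J * E t) := by
        have h4 : ((E t)ᵀ * J * E t)ᵀ = -((E t)ᵀ * J * E t) := by
          rw [transpose_mul, transpose_mul, transpose_transpose, hJ]
          simp [mul_neg, neg_mul, mul_assoc]
        rw [transpose_sub, hJ, h4]
        abel
      have heq : ((Mmat d A N t).map Complex.ofReal +
          Complex.I • ((J - (E t)ᵀ * J * E t).map Complex.ofReal))ᵀ =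
          (Mmat d A N t).map Complex.ofReal +
          (-Complex.I) • ((J - (E t)ᵀ * J * E t).map Complex.ofReal) := by
        rw [transpose_add, transpose_smul, ← transpose_map, ← transpose_map, hMsym, hQskew]
        congr 1
        ext i j
        simp only [Matrix.neg_apply, Matrix.smul_apply, Matrix.map_apply, Matrix.sub_apply,
          smul_eq_mul, neg_mul, neg_smul]
        push_cast
        ring
      rw [heq] at hpsd
      exact hpsd.dotProduct_mulVec_nonneg x
    have hti : (0:ℂ) ≤ (Complex.ofReal t)⁻¹ := by
      rw [← Complex.ofReal_inv]
      exact Complex.zero_le_real.mpr (inv_nonneg.mpr (le_of_lt ht))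
    exact mul_nonneg hti hgt
  exact ge_of_tendsto hslope hnonneg

theorem infinitesimal_condition (n : ℕ) (hn : 1 ≤ n)
    (A N : Matrix (Fin (2*n)) (Fin (2*n)) ℝ) (hN : Nᵀ = N)
    (h : ∀ t : ℝ, 0 < t →
      ((Mmat (2*n) A N t).map Complex.ofReal +
        Complex.I • ((sympJ n -
          (NormedSpace.exp (t • A))ᵀ * sympJ n * NormedSpace.exp (t • A)).map
            Complex.ofReal)).PosSemidef) :
    (N.map Complex.ofReal +
      Complex.I • ((Aᵀ * sympJ n + sympJ n * A).map Complex.ofReal)).PosSemidef :=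
  infinitesimal_aux A N (sympJ n) hN (sympJ_transpose n) h
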